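/- Let a ∈ X, let n ≥ 1, and let P ∈ ℚ⟨X⟩ be homogeneous of degree n (a ℚ-linear combination of words of length n) with the coefficient of the word a^n in P equal to zero. If [ι a, P] is a Lie polynomial, then P = (1/n)·r(P); in particular P is a Lie polynomial. -/

import Mathlib

/-!
Setting: `ℚ⟨X⟩ = FreeAlgebra ℚ X`, the free associative `ℚ`-algebra on a type `X` of
non-commuting variables, with the commutator bracket `⁅P,Q⁆ = P*Q - Q*P` and canonical
inclusion `ι = FreeAlgebra.ι ℚ`.  The words (elements of `FreeMonoid X`) form a `ℚ`-basis
`FreeAlgebra.basisFreeMonoid ℚ X` of `ℚ⟨X⟩`.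
-/

/-- The right-normed bracketing of a word:
`[ι x₁,[ι x₂,[…,[ι x_{n−1}, ι xₙ]…]]]`, with the empty word mapped to `0`. -/
noncomputable def rword {X : Type*} : List X → FreeAlgebra ℚ X
  | [] => 0
  | [x] => FreeAlgebra.ι ℚ x
  | x :: y :: ys => ⁅FreeAlgebra.ι ℚ x, rword (y :: ys)⁆

/-- The right-normed bracketing map `r : ℚ⟨X⟩ → ℚ⟨X⟩`: the unique `ℚ`-linear map sending the
basis word `w₁w₂⋯wₙ` to `[ι w₁,[ι w₂,[…,[ι w_{n−1}, ι wₙ]…]]]` (and the empty word `1` to `0`,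
and a single letter `x` to `ι x`). -/
noncomputable def rmap (X : Type*) : FreeAlgebra ℚ X →ₗ[ℚ] FreeAlgebra ℚ X :=
  (FreeAlgebra.basisFreeMonoid ℚ X).constr ℚ fun w => rword w.toList

/-- The coefficient of the word `w` in `P`, with respect to the basis of words of `ℚ⟨X⟩`. -/
noncomputable def coeffWord {X : Type*} (P : FreeAlgebra ℚ X) (w : FreeMonoid X) : ℚ :=
  (FreeAlgebra.basisFreeMonoid ℚ X).repr P w

attribute [local instance 100] LieRing.ofAssociativeRing

/-- `P` is a Lie polynomial: it belongs to the Lie subalgebra of `ℚ⟨X⟩` (under the commutator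
bracket) generated by the image of `ι`, i.e. the smallest `ℚ`-subspace of `ℚ⟨X⟩` containing
`ι(X)` and closed under commutators. -/
def IsLiePolynomial {X : Type*} (P : FreeAlgebra ℚ X) : Prop :=
  P ∈ LieSubalgebra.lieSpan ℚ (FreeAlgebra ℚ X) (Set.range (FreeAlgebra.ι ℚ))

/-- `P` is homogeneous of degree `n`: a `ℚ`-linear combination of words of length `n`. -/
def IsHomogeneous {X : Type*} (n : ℕ) (P : FreeAlgebra ℚ X) : Prop :=
  P ∈ Submodule.span ℚ
    ((fun w : List X => (w.map (FreeAlgebra.ι ℚ)).prod) '' {w : List X | w.length = n})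

section Aux
open FreeAlgebra
variable {X : Type*}

noncomputable abbrev bb (X : Type*) := FreeAlgebra.basisFreeMonoid ℚ X

lemma bb_apply (w : FreeMonoid X) : bb X w = (w.toList.map (FreeAlgebra.ι ℚ)).prod := by
  unfold bb FreeAlgebra.basisFreeMonoid
  rw [Module.Basis.map_apply, Finsupp.coe_basisSingleOne]
  show (equivMonoidAlgebraFreeMonoid (R := ℚ) (X := X)).symm (MonoidAlgebra.single w 1) = _
  rw [equivMonoidAlgebraFreeMonoid, AlgEquiv.ofAlgHom_symm_apply, MonoidAlgebra.lift_single,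
    one_smul, FreeMonoid.lift_apply]

lemma bb_ofList (l : List X) : bb X (FreeMonoid.ofList l) = (l.map (FreeAlgebra.ι ℚ)).prod := by
  rw [bb_apply, FreeMonoid.toList_ofList]

lemma bb_mul (w v : FreeMonoid X) : bb X w * bb X v = bb X (w * v) := by
  simp [bb_apply, FreeMonoid.toList_mul]

lemma bb_one : bb X 1 = 1 := by simp [bb_apply]

lemma bb_single (x : X) : bb X (FreeMonoid.ofList [x]) = FreeAlgebra.ι ℚ x := by
  rw [bb_ofList]; simp

lemma bb_cons (x : X) (l : List X) :
    bb X (FreeMonoid.ofList (x :: l)) = FreeAlgebra.ι ℚ x * bb X (FreeMonoid.ofList l) := by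
  rw [bb_ofList, bb_ofList, List.map_cons, List.prod_cons]

lemma rword_cons (x : X) (l : List X) (h : l ≠ []) :
    rword (x :: l) = ⁅FreeAlgebra.ι ℚ x, rword l⁆ := by
  match l with
  | [] => exact absurd rfl h
  | y :: ys => rfl

lemma rmap_bb (w : FreeMonoid X) : rmap X (bb X w) = rword w.toList :=
  Module.Basis.constr_basis _ _ _ _

lemma rmap_ofList (l : List X) : rmap X (bb X (FreeMonoid.ofList l)) = rword l := by
  rw [rmap_bb, FreeMonoid.toList_ofList]

/-- algebra hom `x ↦ ad (ι x)` -/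
noncomputable def phi (X : Type*) : FreeAlgebra ℚ X →ₐ[ℚ] Module.End ℚ (FreeAlgebra ℚ X) :=
  FreeAlgebra.lift ℚ fun x =>
    LinearMap.mulLeft ℚ (FreeAlgebra.ι ℚ x) - LinearMap.mulRight ℚ (FreeAlgebra.ι ℚ x)

lemma phi_ι (x : X) (v : FreeAlgebra ℚ X) : phi X (FreeAlgebra.ι ℚ x) v = ⁅FreeAlgebra.ι ℚ x, v⁆ := by
  rw [phi, FreeAlgebra.lift_ι_apply]
  simp [Ring.lie_def]

/-- span of nonempty words -/
noncomputable def NW (X : Type*) : Submodule ℚ (FreeAlgebra ℚ X) :=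
  Submodule.span ℚ ((fun l : List X => bb X (FreeMonoid.ofList l)) '' {l | l ≠ []})

lemma bb_mem_NW {l : List X} (h : l ≠ []) : bb X (FreeMonoid.ofList l) ∈ NW X :=
  Submodule.subset_span ⟨l, h, rfl⟩

lemma ι_mem_NW (x : X) : FreeAlgebra.ι ℚ x ∈ NW X := by
  rw [← bb_single x]; exact bb_mem_NW (by simp)

lemma NW_mul {u v : FreeAlgebra ℚ X} (hu : u ∈ NW X) (hv : v ∈ NW X) : u * v ∈ NW X := by
  induction hu using Submodule.span_induction generalizing v with
  | mem p hp =>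
    obtain ⟨l, hl, rfl⟩ := hp
    induction hv using Submodule.span_induction with
    | mem q hq =>
      obtain ⟨m, hm, rfl⟩ := hq
      rw [bb_mul]
      exact bb_mem_NW (by simp [FreeMonoid.ofList]; exact fun h _ => hl h)
    | zero => simp
    | add x y _ _ hx hy => rw [mul_add]; exact add_mem hx hy
    | smul c x _ hx => rw [mul_smul_comm]; exact Submodule.smul_mem _ _ hx
  | zero => simp
  | add x y _ _ hx hy => rw [add_mul]; exact add_mem (hx hv) (hy hv)
  | smul c x _ hx => rw [smul_mul_assoc]; exact Submodule.smul_mem _ _ (hx hv)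

lemma rmap_mul_word (w l : List X) (hl : l ≠ []) :
    rmap X (bb X (FreeMonoid.ofList w) * bb X (FreeMonoid.ofList l))
      = phi X (bb X (FreeMonoid.ofList w)) (rmap X (bb X (FreeMonoid.ofList l))) := by
  induction w with
  | nil =>
    have : (FreeMonoid.ofList ([] : List X)) = 1 := rfl
    rw [this, bb_one, one_mul, map_one]
    rfl
  | cons x w ih =>
    have h1 : bb X (FreeMonoid.ofList w) * bb X (FreeMonoid.ofList l)
        = bb X (FreeMonoid.ofList (w ++ l)) := by rw [bb_mul]; rfl
    have h2 : bb X (FreeMonoid.ofList (x :: w)) * bb X (FreeMonoid.ofList l)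
        = bb X (FreeMonoid.ofList (x :: (w ++ l))) := by rw [bb_mul]; rfl
    rw [h2, rmap_ofList, rword_cons _ _ (by simp [hl]), ← rmap_ofList, ← h1, ih, ← phi_ι,
      bb_cons, map_mul, Module.End.mul_apply]

lemma rmap_mul_right {B : FreeAlgebra ℚ X} (hB : B ∈ NW X) (A : FreeAlgebra ℚ X) :
    rmap X (A * B) = phi X A (rmap X B) := by
  induction hB using Submodule.span_induction with
  | mem p hp =>
    obtain ⟨l, hl, rfl⟩ := hp
    have key : (rmap X).comp (LinearMap.mulRight ℚ (bb X (FreeMonoid.ofList l)))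
        = (LinearMap.applyₗ (rmap X (bb X (FreeMonoid.ofList l)))).comp (phi X).toLinearMap := by
      apply Module.Basis.ext (bb X)
      intro w
      have := rmap_mul_word w.toList l hl
      simpa [FreeMonoid.ofList_toList] using this
    have := DFunLike.congr_fun key A
    simpa using this
  | zero => simp
  | add x y _ _ ihx ihy => rw [mul_add, map_add, map_add, ihx, ihy, map_add]
  | smul c x _ ihx => rw [mul_smul_comm, map_smul, map_smul, ihx, map_smul]

noncomputable def euler (X : Type*) : FreeAlgebra ℚ X →ₗ[ℚ] FreeAlgebra ℚ X :=
  (FreeAlgebra.basisFreeMonoid ℚ X).constr ℚ fun w => (w.toList.length : ℚ) • bb X w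

lemma euler_bb (w : FreeMonoid X) : euler X (bb X w) = (w.toList.length : ℚ) • bb X w :=
  Module.Basis.constr_basis _ _ _ _

lemma euler_mul (P Q : FreeAlgebra ℚ X) :
    euler X (P * Q) = euler X P * Q + P * euler X Q := by
  have key : (LinearMap.mul ℚ (FreeAlgebra ℚ X)).compr₂ (euler X)
      = (LinearMap.mul ℚ (FreeAlgebra ℚ X)).comp (euler X)
        + (LinearMap.mul ℚ (FreeAlgebra ℚ X)).compl₂ (euler X) := by
    apply Module.Basis.ext (bb X); intro w
    apply Module.Basis.ext (bb X); intro v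
    simp only [LinearMap.compr₂_apply, LinearMap.mul_apply', LinearMap.add_apply,
      LinearMap.comp_apply, LinearMap.compl₂_apply]
    rw [bb_mul, euler_bb, euler_bb, euler_bb, smul_mul_assoc, mul_smul_comm, bb_mul,
      ← add_smul, FreeMonoid.toList_mul, List.length_append]
    push_cast
    ring_nf
  have := DFunLike.congr_fun (DFunLike.congr_fun key P) Q
  simpa using this

noncomputable def KK (X : Type*) : LieSubalgebra ℚ (FreeAlgebra ℚ X) where
  carrier := {u | u ∈ NW X ∧ (∀ v, phi X u v = ⁅u, v⁆) ∧ rmap X u = euler X u}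
  zero_mem' := by
    refine ⟨zero_mem _, fun v => by simp, by simp⟩
  add_mem' := by
    rintro x y ⟨hx1, hx2, hx3⟩ ⟨hy1, hy2, hy3⟩
    refine ⟨add_mem hx1 hy1, fun v => ?_, by rw [map_add, map_add, hx3, hy3]⟩
    rw [map_add, LinearMap.add_apply, hx2, hy2, add_lie]
  smul_mem' := by
    rintro c x ⟨hx1, hx2, hx3⟩
    refine ⟨Submodule.smul_mem _ _ hx1, fun v => ?_, by rw [map_smul, map_smul, hx3]⟩
    rw [map_smul, LinearMap.smul_apply, hx2, smul_lie]
  lie_mem' := by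
    rintro x y ⟨hx1, hx2, hx3⟩ ⟨hy1, hy2, hy3⟩
    have hlie : ⁅x, y⁆ = x * y - y * x := Ring.lie_def x y
    refine ⟨?_, fun v => ?_, ?_⟩
    · rw [hlie]; exact sub_mem (NW_mul hx1 hy1) (NW_mul hy1 hx1)
    · rw [hlie, map_sub, map_mul, map_mul, LinearMap.sub_apply, Module.End.mul_apply,
        Module.End.mul_apply, hx2, hy2, hx2, hy2, ← hlie, lie_lie]
    · rw [hlie, map_sub, map_sub, rmap_mul_right hy1, rmap_mul_right hx1, hx3, hy3,
        euler_mul, euler_mul, hx2, hy2, Ring.lie_def, Ring.lie_def]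
      noncomm_ring

abbrev LSpan (X : Type*) := LieSubalgebra.lieSpan ℚ (FreeAlgebra ℚ X) (Set.range (FreeAlgebra.ι ℚ))

lemma lieSpan_le_KK : LSpan X ≤ KK X := by
  rw [LieSubalgebra.lieSpan_le]
  rintro _ ⟨x, rfl⟩
  refine ⟨ι_mem_NW x, phi_ι x, ?_⟩
  rw [← bb_single, rmap_ofList, euler_bb]
  rw [bb_single]
  show rword [x] = ((1:ℕ) : ℚ) • FreeAlgebra.ι ℚ x
  rw [rword]
  simp

lemma dsw {Q : FreeAlgebra ℚ X} (h : Q ∈ LSpan X) :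
    rmap X Q = euler X Q ∧ ∀ v, phi X Q v = ⁅Q, v⁆ :=
  ⟨(lieSpan_le_KK h).2.2, (lieSpan_le_KK h).2.1⟩

lemma rword_mem_lspan (l : List X) : rword l ∈ LSpan X := by
  induction l with
  | nil => rw [rword]; exact zero_mem _
  | cons x ys ih =>
    cases ys with
    | nil => exact LieSubalgebra.subset_lieSpan ⟨x, rfl⟩
    | cons y yt =>
      rw [rword]
      exact LieSubalgebra.lie_mem _ (LieSubalgebra.subset_lieSpan ⟨x, rfl⟩) ih

lemma rmap_mem_lspan (Q : FreeAlgebra ℚ X) : rmap X Q ∈ LSpan X := by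
  have hQ : Q ∈ Submodule.span ℚ (Set.range (bb X)) := by
    rw [Module.Basis.span_eq]; trivial
  induction hQ using Submodule.span_induction with
  | mem p hp => obtain ⟨w, rfl⟩ := hp; rw [rmap_bb]; exact rword_mem_lspan _
  | zero => rw [map_zero]; exact zero_mem _
  | add x y _ _ ihx ihy => rw [map_add]; exact add_mem ihx ihy
  | smul c x _ ihx => rw [map_smul]; exact (LSpan X).smul_mem c ihx

lemma hom_mem_NW {n : ℕ} (hn : 1 ≤ n) {P : FreeAlgebra ℚ X} (h : IsHomogeneous n P) :
    P ∈ NW X := by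
  induction h using Submodule.span_induction with
  | mem p hp =>
    obtain ⟨l, hl, rfl⟩ := hp
    simp only
    rw [← bb_ofList]
    exact bb_mem_NW (by rintro rfl; simp at hl; omega)
  | zero => exact zero_mem _
  | add x y _ _ ihx ihy => exact add_mem ihx ihy
  | smul c x _ ihx => exact Submodule.smul_mem _ _ ihx

lemma euler_hom {n : ℕ} {P : FreeAlgebra ℚ X} (h : IsHomogeneous n P) :
    euler X P = (n : ℚ) • P := by
  induction h using Submodule.span_induction with
  | mem p hp =>
    obtain ⟨l, hl, rfl⟩ := hp
    simp only
    rw [← bb_ofList, euler_bb]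
    simp only [FreeMonoid.toList_ofList]
    rw [Set.mem_setOf_eq] at hl
    rw [hl]
  | zero => simp
  | add x y _ _ ihx ihy => rw [map_add, ihx, ihy, smul_add]
  | smul c x _ ihx => rw [map_smul, ihx, smul_comm]

lemma rmap_deg_one {P : FreeAlgebra ℚ X} (h : IsHomogeneous 1 P) : rmap X P = P := by
  induction h using Submodule.span_induction with
  | mem p hp =>
    obtain ⟨l, hl, rfl⟩ := hp
    rw [Set.mem_setOf_eq, List.length_eq_one_iff] at hl
    obtain ⟨x, rfl⟩ := hl
    simp only
    rw [← bb_ofList, rmap_ofList, rword, bb_single]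
  | zero => simp
  | add x y _ _ ihx ihy => rw [map_add, ihx, ihy]
  | smul c x _ ihx => rw [map_smul, ihx]

section Pa
variable [DecidableEq X] (a : X)

noncomputable def pa : FreeAlgebra ℚ X →ₐ[ℚ] Polynomial ℚ :=
  FreeAlgebra.lift ℚ fun x => if x = a then Polynomial.X else 0

lemma pa_ι (x : X) : pa a (FreeAlgebra.ι ℚ x) = if x = a then Polynomial.X else 0 := by
  rw [pa, FreeAlgebra.lift_ι_apply]

lemma pa_bb_all {l : List X} (h : ∀ x ∈ l, x = a) :
    pa a (bb X (FreeMonoid.ofList l)) = Polynomial.X ^ l.length := by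
  induction l with
  | nil => rw [show FreeMonoid.ofList ([] : List X) = 1 from rfl, bb_one]; simp
  | cons x l ih =>
    rw [bb_cons, map_mul, pa_ι, if_pos (h x (by simp)), ih (fun y hy => h y (by simp [hy]))]
    rw [List.length_cons, pow_succ]
    ring

lemma pa_bb_not {l : List X} (h : ∃ x ∈ l, x ≠ a) :
    pa a (bb X (FreeMonoid.ofList l)) = 0 := by
  induction l with
  | nil => simp at h
  | cons x l ih =>
    rw [bb_cons, map_mul]
    by_cases hx : x = a
    · have hex : ∃ y ∈ l, y ≠ a := by
        obtain ⟨y, hy, hne⟩ := h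
        rcases List.mem_cons.mp hy with rfl | hy'
        · exact absurd hx hne
        · exact ⟨y, hy', hne⟩
      rw [ih hex, mul_zero]
    · rw [pa_ι, if_neg hx, zero_mul]

lemma pa_coeff (Q : FreeAlgebra ℚ X) (k : ℕ) :
    (pa a Q).coeff k = coeffWord Q (FreeMonoid.ofList (List.replicate k a)) := by
  classical
  have key : (Polynomial.lcoeff ℚ k).comp (pa a).toLinearMap
      = (Finsupp.lapply (FreeMonoid.ofList (List.replicate k a))).comp
          ((FreeAlgebra.basisFreeMonoid ℚ X).repr : FreeAlgebra ℚ X →ₗ[ℚ] (FreeMonoid X →₀ ℚ)) := by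
    apply Module.Basis.ext (bb X)
    intro w
    simp only [LinearMap.comp_apply, Polynomial.lcoeff_apply, LinearEquiv.coe_coe,
      Finsupp.lapply_apply, AlgHom.toLinearMap_apply]
    rw [Module.Basis.repr_self, Finsupp.single_apply]
    have hw : w = FreeMonoid.ofList w.toList := (FreeMonoid.ofList_toList w).symm
    by_cases hall : ∀ x ∈ w.toList, x = a
    · have hpa : pa a (bb X w) = Polynomial.X ^ w.toList.length := by
        conv_lhs => rw [hw]
        exact pa_bb_all a hall
      rw [hpa, Polynomial.coeff_X_pow]
      have hiff : w = FreeMonoid.ofList (List.replicate k a) ↔ w.toList.length = k := by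
        constructor
        · intro h
          have h2 : w.toList = List.replicate k a := by
            have := congrArg FreeMonoid.toList h
            simpa using this
          rw [h2, List.length_replicate]
        · intro h
          rw [hw]
          congr 1
          exact List.eq_replicate_iff.mpr ⟨h, hall⟩
      by_cases hk : w.toList.length = k
      · rw [if_pos hk.symm, if_pos (hiff.mpr hk)]
      · rw [if_neg (fun h => hk h.symm), if_neg (fun hc => hk (hiff.mp hc))]
    · push_neg at hall
      have hpa : pa a (bb X w) = 0 := by
        conv_lhs => rw [hw]
        exact pa_bb_not a hall
      rw [hpa, Polynomial.coeff_zero, if_neg]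
      intro hc
      obtain ⟨x, hx, hne⟩ := hall
      rw [hc] at hx
      simp only [FreeMonoid.toList_ofList] at hx
      exact hne (List.eq_of_mem_replicate hx)
  exact DFunLike.congr_fun key Q

end Pa

lemma bb_of_mul (x : X) (w : FreeMonoid X) :
    FreeAlgebra.ι ℚ x * bb X w = bb X (FreeMonoid.of x * w) := by
  rw [← bb_single, bb_mul, FreeMonoid.ofList_singleton]

lemma bb_mul_of (x : X) (w : FreeMonoid X) :
    bb X w * FreeAlgebra.ι ℚ x = bb X (w * FreeMonoid.of x) := by
  rw [← bb_single, bb_mul, FreeMonoid.ofList_singleton]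

lemma repr_ι_mul (x : X) (S : FreeAlgebra ℚ X) :
    (bb X).repr (FreeAlgebra.ι ℚ x * S)
      = Finsupp.mapDomain (fun w => FreeMonoid.of x * w) ((bb X).repr S) := by
  have key : ((bb X).repr : FreeAlgebra ℚ X →ₗ[ℚ] (FreeMonoid X →₀ ℚ)).comp
        (LinearMap.mulLeft ℚ (FreeAlgebra.ι ℚ x))
      = (Finsupp.lmapDomain ℚ ℚ (fun w => FreeMonoid.of x * w)).comp
          ((bb X).repr : FreeAlgebra ℚ X →ₗ[ℚ] (FreeMonoid X →₀ ℚ)) := by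
    apply Module.Basis.ext (bb X); intro w
    simp only [LinearMap.comp_apply, LinearMap.mulLeft_apply, LinearEquiv.coe_coe,
      Finsupp.lmapDomain_apply, Module.Basis.repr_self, Finsupp.mapDomain_single]
    rw [bb_of_mul, Module.Basis.repr_self]
  exact DFunLike.congr_fun key S

lemma repr_mul_ι (x : X) (S : FreeAlgebra ℚ X) :
    (bb X).repr (S * FreeAlgebra.ι ℚ x)
      = Finsupp.mapDomain (fun w => w * FreeMonoid.of x) ((bb X).repr S) := by
  have key : ((bb X).repr : FreeAlgebra ℚ X →ₗ[ℚ] (FreeMonoid X →₀ ℚ)).comp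
        (LinearMap.mulRight ℚ (FreeAlgebra.ι ℚ x))
      = (Finsupp.lmapDomain ℚ ℚ (fun w => w * FreeMonoid.of x)).comp
          ((bb X).repr : FreeAlgebra ℚ X →ₗ[ℚ] (FreeMonoid X →₀ ℚ)) := by
    apply Module.Basis.ext (bb X); intro w
    simp only [LinearMap.comp_apply, LinearMap.mulRight_apply, LinearEquiv.coe_coe,
      Finsupp.lmapDomain_apply, Module.Basis.repr_self, Finsupp.mapDomain_single]
    rw [bb_mul_of, Module.Basis.repr_self]
  exact DFunLike.congr_fun key S

lemma of_mul_injective (x : X) : Function.Injective (fun w : FreeMonoid X => FreeMonoid.of x * w) :=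
  fun u v h => by
    have := congrArg FreeMonoid.toList h
    simp only [FreeMonoid.toList_mul, FreeMonoid.toList_of] at this
    exact FreeMonoid.toList.injective (by simpa using this)

lemma mul_of_injective (x : X) : Function.Injective (fun w : FreeMonoid X => w * FreeMonoid.of x) :=
  fun u v h => by
    have := congrArg FreeMonoid.toList h
    simp only [FreeMonoid.toList_mul, FreeMonoid.toList_of] at this
    exact FreeMonoid.toList.injective (by simpa using this)

lemma ofList_cons_eq (x : X) (l : List X) :
    FreeMonoid.ofList (x :: l) = FreeMonoid.of x * FreeMonoid.ofList l := by
  apply FreeMonoid.toList.injective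
  simp

lemma ofList_concat_eq (x : X) (l : List X) :
    FreeMonoid.ofList (l ++ [x]) = FreeMonoid.ofList l * FreeMonoid.of x := by
  apply FreeMonoid.toList.injective
  simp

section Central
variable {a : X} {S : FreeAlgebra ℚ X} (hc : FreeAlgebra.ι ℚ a * S = S * FreeAlgebra.ι ℚ a)
include hc

lemma fact1 (m : List X) (b : X) (hb : b ≠ a) :
    coeffWord S (FreeMonoid.ofList (m ++ [b])) = 0 := by
  have h1 := congrArg (fun T => ((bb X).repr T) (FreeMonoid.ofList (a :: (m ++ [b])))) hc
  simp only [repr_ι_mul, repr_mul_ι] at h1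
  rw [ofList_cons_eq, Finsupp.mapDomain_apply (of_mul_injective a)] at h1
  rw [Finsupp.mapDomain_notin_range] at h1
  · exact h1
  · rintro ⟨v, hv⟩
    have := congrArg FreeMonoid.toList hv
    simp only [FreeMonoid.toList_mul, FreeMonoid.toList_of, FreeMonoid.toList_ofList] at this
    have h2 : (a :: m) ++ [b] = FreeMonoid.toList v ++ [a] := by simpa using this.symm
    have := (List.append_inj' h2 rfl).2
    simp at this
    exact hb this

lemma fact2 (m : List X) :
    coeffWord S (FreeMonoid.ofList (m ++ [a])) = coeffWord S (FreeMonoid.ofList (a :: m)) := by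
  have h1 := congrArg (fun T => ((bb X).repr T) (FreeMonoid.ofList (a :: (m ++ [a])))) hc
  simp only [repr_ι_mul, repr_mul_ι] at h1
  rw [ofList_cons_eq, Finsupp.mapDomain_apply (of_mul_injective a)] at h1
  have h2 : FreeMonoid.ofList (a :: (m ++ [a])) = FreeMonoid.ofList (a :: m) * FreeMonoid.of a := by
    apply FreeMonoid.toList.injective
    simp
  rw [← ofList_cons_eq, h2, Finsupp.mapDomain_apply (mul_of_injective a)] at h1
  exact h1

lemma central_aux (k : ℕ) : ∀ (m : List X) (b : X), b ≠ a →
    coeffWord S (FreeMonoid.ofList ((m ++ [b]) ++ List.replicate k a)) = 0 := by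
  induction k with
  | zero => intro m b hb; simpa using fact1 hc m b hb
  | succ k ih =>
    intro m b hb
    have e1 : (m ++ [b]) ++ List.replicate (k+1) a
        = ((m ++ [b]) ++ List.replicate k a) ++ [a] := by
      rw [List.replicate_succ', ← List.append_assoc]
    rw [e1, fact2 hc]
    have e2 : a :: ((m ++ [b]) ++ List.replicate k a)
        = (((a :: m) ++ [b]) ++ List.replicate k a) := by simp
    rw [e2]
    exact ih (a :: m) b hb

lemma central (w : List X) (hw : ∃ b ∈ w, b ≠ a) :
    coeffWord S (FreeMonoid.ofList w) = 0 := by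
  have decomp : ∀ (w : List X), (∃ b ∈ w, b ≠ a) →
      ∃ (m : List X) (b : X) (k : ℕ), b ≠ a ∧ w = (m ++ [b]) ++ List.replicate k a := by
    intro w
    induction w using List.reverseRecOn with
    | nil => rintro ⟨b, hb, _⟩; simp at hb
    | append_singleton l x ih =>
      rintro ⟨b, hb, hbne⟩
      by_cases hx : x = a
      · subst hx
        have hbl : b ∈ l := by
          rcases List.mem_append.mp hb with h | h
          · exact h
          · simp at h; exact absurd h hbne
        obtain ⟨m, b', k, hb', rfl⟩ := ih ⟨b, hbl, hbne⟩
        exact ⟨m, b', k + 1, hb', by rw [List.replicate_succ', ← List.append_assoc, List.append_assoc]⟩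
      · exact ⟨l, x, 0, hx, by simp⟩
  obtain ⟨m, b, k, hb, rfl⟩ := decomp w hw
  exact central_aux hc k m b hb

end Central

lemma rmap_ι (x : X) : rmap X (FreeAlgebra.ι ℚ x) = FreeAlgebra.ι ℚ x := by
  conv_lhs => rw [← bb_single]
  rw [rmap_ofList, rword]

lemma euler_ι (x : X) : euler X (FreeAlgebra.ι ℚ x) = FreeAlgebra.ι ℚ x := by
  have h := euler_bb (X := X) (FreeMonoid.ofList [x])
  rw [bb_single] at h
  simpa using h

lemma eq_zero_of_coeffs {S : FreeAlgebra ℚ X} (h : ∀ w : FreeMonoid X, coeffWord S w = 0) :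
    S = 0 := by
  have h0 : (bb X).repr S = 0 := Finsupp.ext fun w => h w
  exact ((bb X).repr.map_eq_zero_iff).mp h0

lemma eq_zero_of_central [DecidableEq X] {a : X} {T : FreeAlgebra ℚ X}
    (hcomm : FreeAlgebra.ι ℚ a * T = T * FreeAlgebra.ι ℚ a)
    (hpa : pa a T = 0) : T = 0 := by
  apply eq_zero_of_coeffs
  intro w
  by_cases hall : ∀ x ∈ w.toList, x = a
  · have hw : w = FreeMonoid.ofList (List.replicate w.toList.length a) := by
      apply FreeMonoid.toList.injective
      simp only [FreeMonoid.toList_ofList]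
      exact List.eq_replicate_iff.mpr ⟨rfl, hall⟩
    rw [hw, ← pa_coeff, hpa, Polynomial.coeff_zero]
  · push_neg at hall
    have hw : w = FreeMonoid.ofList w.toList := (FreeMonoid.ofList_toList w).symm
    rw [hw]
    exact central hcomm w.toList hall

lemma pa_rword [DecidableEq X] (a : X) (x y : X) (ys : List X) :
    pa a (rword (x :: y :: ys)) = 0 := by
  rw [rword, Ring.lie_def, map_sub, map_mul, map_mul, mul_comm, sub_self]

lemma pa_hom_eq [DecidableEq X] (a : X) {n : ℕ} {P : FreeAlgebra ℚ X} (h : IsHomogeneous n P) :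
    ∃ c : ℚ, pa a P = c • Polynomial.X ^ n := by
  induction h using Submodule.span_induction with
  | mem p hp =>
    obtain ⟨l, hl, rfl⟩ := hp
    rw [Set.mem_setOf_eq] at hl
    simp only
    rw [← bb_ofList]
    by_cases hall : ∀ x ∈ l, x = a
    · exact ⟨1, by rw [pa_bb_all a hall, hl, one_smul]⟩
    · push_neg at hall
      exact ⟨0, by rw [pa_bb_not a hall, zero_smul]⟩
  | zero => exact ⟨0, by simp⟩
  | add x y _ _ ihx ihy =>
    obtain ⟨c, hc⟩ := ihx; obtain ⟨d, hd⟩ := ihy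
    exact ⟨c + d, by rw [map_add, hc, hd, add_smul]⟩
  | smul r x _ ihx =>
    obtain ⟨c, hc⟩ := ihx
    exact ⟨r * c, by rw [map_smul, hc, smul_smul]⟩

lemma pa_rmap_eq_zero [DecidableEq X] (a : X) {n : ℕ} (hn2 : 2 ≤ n) {P : FreeAlgebra ℚ X}
    (h : IsHomogeneous n P) : pa a (rmap X P) = 0 := by
  induction h using Submodule.span_induction with
  | mem p hp =>
    obtain ⟨l, hl, rfl⟩ := hp
    rw [Set.mem_setOf_eq] at hl
    simp only
    rw [← bb_ofList, rmap_ofList]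
    match l, hl with
    | x :: y :: ys, _ => exact pa_rword a x y ys
    | [], hl => simp at hl; omega
    | [x], hl => simp at hl; omega
  | zero => simp
  | add x y _ _ ihx ihy => rw [map_add, map_add, ihx, ihy, add_zero]
  | smul r x _ ihx => rw [map_smul, map_smul, ihx, smul_zero]

end Aux

/-- If `P` is homogeneous of degree `n ≥ 1` with vanishing coefficient of `a^n`, and
`[ι a, P]` is a Lie polynomial, then `P = (1/n)·r(P)`; in particular `P` is a Lie
polynomial. -/
theorem stmt_12 {X : Type*} (a : X) (n : ℕ) (hn : 1 ≤ n) (P : FreeAlgebra ℚ X)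
    (hHom : IsHomogeneous n P)
    (hcoeff : coeffWord P (FreeMonoid.ofList (List.replicate n a)) = 0)
    (hLie : IsLiePolynomial ⁅FreeAlgebra.ι ℚ a, P⁆) :
    P = (1 / (n : ℚ)) • rmap X P ∧ IsLiePolynomial P := by
  classical
  have hn0 : (n : ℚ) ≠ 0 := Nat.cast_ne_zero.mpr (by omega)
  have key : rmap X P = (n : ℚ) • P := by
    by_cases h1 : n = 1
    · subst h1
      rw [rmap_deg_one hHom]; simp
    · have hn2 : 2 ≤ n := by omega
      have hPNW : P ∈ NW X := hom_mem_NW hn hHom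
      have hEP : euler X P = (n:ℚ) • P := euler_hom hHom
      have hdsw := dsw (X := X) (Q := ⁅FreeAlgebra.ι ℚ a, P⁆) hLie
      set Q : FreeAlgebra ℚ X := ⁅FreeAlgebra.ι ℚ a, P⁆ with hQdef
      have hEQ : euler X Q = ((n:ℚ)+1) • Q := by
        rw [hQdef, Ring.lie_def, map_sub, euler_mul, euler_mul, hEP, euler_ι,
          smul_mul_assoc, mul_smul_comm]
        module
      have hrQ2 : rmap X Q = ⁅FreeAlgebra.ι ℚ a, rmap X P⁆ - phi X P (FreeAlgebra.ι ℚ a) := by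
        rw [hQdef, Ring.lie_def, map_sub, rmap_mul_right hPNW, rmap_mul_right (ι_mem_NW a),
          rmap_ι, phi_ι]
      have hphiP : phi X P (FreeAlgebra.ι ℚ a)
          = ⁅FreeAlgebra.ι ℚ a, rmap X P⁆ - ((n:ℚ)+1) • Q := by
        have h := hdsw.1
        rw [hrQ2, hEQ] at h
        have h2 := sub_eq_iff_eq_add.mp h
        rw [h2]
        module
      have hB : ⁅FreeAlgebra.ι ℚ a, phi X P (FreeAlgebra.ι ℚ a)⁆ = ⁅Q, FreeAlgebra.ι ℚ a⁆ := by
        have h2 := hdsw.2 (FreeAlgebra.ι ℚ a)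
        rw [hQdef, Ring.lie_def, map_sub, map_mul, map_mul] at h2
        simp only [LinearMap.sub_apply, Module.End.mul_apply] at h2
        rw [phi_ι, phi_ι, lie_self, map_zero, sub_zero, ← Ring.lie_def] at h2
        exact h2
      set S : FreeAlgebra ℚ X := rmap X P - (n:ℚ) • P with hSdef
      have hS : ⁅FreeAlgebra.ι ℚ a, ⁅FreeAlgebra.ι ℚ a, S⁆⁆ = 0 := by
        rw [hphiP, lie_sub, lie_smul] at hB
        have hB' := sub_eq_iff_eq_add.mp hB
        rw [hSdef, lie_sub, lie_smul, lie_sub, lie_smul, hB', ← hQdef, ← lie_skew (x := FreeAlgebra.ι ℚ a) (y := Q)]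
        module
      have hTcomm : FreeAlgebra.ι ℚ a * ⁅FreeAlgebra.ι ℚ a, S⁆
          = ⁅FreeAlgebra.ι ℚ a, S⁆ * FreeAlgebra.ι ℚ a := by
        have h3 := hS
        rw [Ring.lie_def (x := FreeAlgebra.ι ℚ a) (y := ⁅FreeAlgebra.ι ℚ a, S⁆), sub_eq_zero] at h3
        exact h3
      have hpaT : pa a ⁅FreeAlgebra.ι ℚ a, S⁆ = 0 := by
        rw [Ring.lie_def, map_sub, map_mul, map_mul, mul_comm, sub_self]
      have hT0 : ⁅FreeAlgebra.ι ℚ a, S⁆ = 0 := eq_zero_of_central hTcomm hpaT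
      have hScomm : FreeAlgebra.ι ℚ a * S = S * FreeAlgebra.ι ℚ a := by
        rw [Ring.lie_def, sub_eq_zero] at hT0
        exact hT0
      have hpaP : pa a P = 0 := by
        obtain ⟨c, hc⟩ := pa_hom_eq a hHom
        have hcf : (pa a P).coeff n = 0 := (pa_coeff a P n).trans hcoeff
        rw [hc] at hcf
        simp only [Polynomial.coeff_smul, Polynomial.coeff_X_pow, smul_eq_mul] at hcf
        simp only [if_pos trivial, mul_one] at hcf
        rw [hc, hcf, zero_smul]
      have hpaS : pa a S = 0 := by
        rw [hSdef, map_sub, map_smul, hpaP, pa_rmap_eq_zero a hn2 hHom, smul_zero, sub_zero]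
      have hS0 : S = 0 := eq_zero_of_central hScomm hpaS
      rw [← sub_eq_zero]
      exact hS0
  have hP : P = (1 / (n : ℚ)) • rmap X P := by
    rw [key, smul_smul, one_div, inv_mul_cancel₀ hn0, one_smul]
  refine ⟨hP, ?_⟩
  show P ∈ LSpan X
  rw [hP]
  exact (LSpan X).smul_mem _ (rmap_mem_lspan P)
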